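/- Fix τ ∈ (3,4) and set η := (τ−3)/(τ−1). For every δ > 0 and every C > 0 there exist constants c_δ < ∞ and C′ > 0 such that for all ε ∈ (0,1]: ε^{−1/(τ−3)} Σ_{i > ε^{−δ−1/η}} i^{−1/(τ−1)} exp( −C ε i^{η} ) ≤ c_δ exp( −C′ ε^{−δη} ). -/

import Mathlib

lemma pow_le_factorial_mul_exp' {x : ℝ} (hx : 0 ≤ x) (k : ℕ) :
    x ^ k ≤ (k.factorial : ℝ) * Real.exp x := by
  have h1 : x ^ k / k.factorial ≤ Real.exp x := by
    calc x ^ k / k.factorial ≤ ∑ i ∈ Finset.range (k+1), x ^ i / i.factorial :=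
          Finset.single_le_sum (f := fun i => x ^ i / i.factorial)
            (fun i _ => by positivity) (Finset.self_mem_range_succ k)
      _ ≤ Real.exp x := Real.sum_le_exp_of_nonneg hx _
  have hk : (0:ℝ) < k.factorial := by exact_mod_cast k.factorial_pos
  rw [div_le_iff₀ hk] at h1; linarith [h1]

lemma stmt15_aux_heq (τ δ r : ℝ) (h3 : τ - 3 ≠ 0) (h1 : τ - 1 ≠ 0) :
    -(1/(τ-3)) + (-r) + (-δ - (τ-1)/(τ-3)) * ((2:ℝ) - r*((τ-3)/(τ-1)))
      = δ*(r*((τ-3)/(τ-1))) - 2*δ - (2*τ-1)/(τ-3) := by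
  field_simp; ring

set_option maxHeartbeats 1000000 in
/-- Fix `τ ∈ (3,4)` and set `η = (τ−3)/(τ−1)`.  For every `δ > 0` and `C > 0`
there exist constants `c_δ < ∞` and `C′ > 0` such that for all `ε ∈ (0,1]`:
`ε^{−1/(τ−3)} Σ_{i > ε^{−δ−1/η}} i^{−1/(τ−1)} exp(−C ε i^η) ≤ c_δ exp(−C′ ε^{−δη})`,
where the sum runs over the integers `i` exceeding `ε^{−δ−1/η}` (note `1/η = (τ−1)/(τ−3)`). -/
theorem stmt15 (τ : ℝ) (hτ1 : 3 < τ) (hτ2 : τ < 4) (δ C : ℝ) (hδ : 0 < δ) (hC : 0 < C) :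
    ∃ cδ C' : ℝ, 0 < C' ∧ ∀ ε : ℝ, 0 < ε → ε ≤ 1 →
      ε ^ (-(1 / (τ - 3))) *
        ∑' i : ℕ, (if ε ^ (-δ - (τ - 1) / (τ - 3)) < (i : ℝ) then
          (i : ℝ) ^ (-(1 / (τ - 1))) * Real.exp (-C * ε * (i : ℝ) ^ ((τ - 3) / (τ - 1)))
          else 0)
      ≤ cδ * Real.exp (-C' * ε ^ (-(δ * ((τ - 3) / (τ - 1))))) := by
  have hτ3 : (0:ℝ) < τ - 3 := by linarith
  have hτ1' : (0:ℝ) < τ - 1 := by linarith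
  set η : ℝ := (τ - 3) / (τ - 1) with hηdef
  have hη : 0 < η := div_pos hτ3 hτ1'
  have hQ : (0:ℝ) < (2*τ-1)/(τ-3) := div_pos (by linarith) hτ3
  obtain ⟨k, hk⟩ := exists_nat_ge ((2 + ((2*τ-1)/(τ-3))/δ)/η)
  have hkη : 2 + ((2*τ-1)/(τ-3))/δ ≤ (k:ℝ) * η := by
    rw [div_le_iff₀ hη] at hk; linarith
  have hkη2 : (2:ℝ) ≤ (k:ℝ) * η := by
    have : 0 ≤ ((2*τ-1)/(τ-3))/δ := le_of_lt (div_pos hQ hδ)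
    linarith
  have hT : Summable (fun i : ℕ => 1 / ((i:ℝ)^2)) := by
    simpa using Real.summable_one_div_nat_pow.mpr (by norm_num : 1 < 2)
  set T : ℝ := ∑' i : ℕ, 1 / ((i:ℝ)^2) with hTdef
  have hT0 : 0 ≤ T := tsum_nonneg fun i => by positivity
  set B : ℝ := (k.factorial : ℝ) * ((C/2)⁻¹)^k with hBdef
  have hB0 : 0 < B := by
    have : (0:ℝ) < k.factorial := by exact_mod_cast k.factorial_pos
    positivity
  refine ⟨B * T, C/2, by linarith, fun ε hε hε1 => ?_⟩
  set N : ℝ := ε ^ (-δ - (τ - 1) / (τ - 3)) with hNdef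
  have hN0 : 0 < N := Real.rpow_pos_of_pos hε _
  have hN1 : 1 ≤ N := by
    apply Real.one_le_rpow_of_pos_of_le_one_of_nonpos hε hε1
    have : 0 < (τ-1)/(τ-3) := by positivity
    linarith
  set E : ℝ := Real.exp (-(C/2) * ε ^ (-(δ * η))) with hEdef
  have hE0 : 0 < E := Real.exp_pos _
  set M : ℝ := B * ε ^ (-(k:ℝ)) * N ^ ((2:ℝ) - (k:ℝ)*η) * E with hMdef
  have hM0 : 0 < M := by positivity
  -- pointwise bound
  have hpt : ∀ i : ℕ,
      (if N < (i : ℝ) then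
          (i : ℝ) ^ (-(1 / (τ - 1))) * Real.exp (-C * ε * (i : ℝ) ^ η) else 0)
        ≤ M * (1 / ((i:ℝ)^2)) := by
    intro i
    split_ifs with hi
    · set x : ℝ := (i:ℝ) with hxdef
      have hx1 : 1 ≤ x := le_trans hN1 hi.le
      have hx0 : 0 < x := by linarith
      have hNx : N ≤ x := hi.le
      have hA : x ^ (-(1/(τ-1))) ≤ 1 :=
        Real.rpow_le_one_of_one_le_of_nonpos hx1 (by rw [neg_nonpos]; positivity)
      have hxη : 0 < x ^ η := Real.rpow_pos_of_pos hx0 _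
      -- key: ε ^ (-(δ*η)) ≤ ε * x ^ η
      have hkey : ε ^ (-(δ*η)) ≤ ε * x ^ η := by
        have h1 : N ^ η ≤ x ^ η := Real.rpow_le_rpow hN0.le hNx hη.le
        have h2 : N ^ η = ε ^ (-(δ*η) - 1) := by
          rw [hNdef, ← Real.rpow_mul hε.le]
          congr 1
          rw [hηdef]; field_simp
        rw [h2] at h1
        calc ε ^ (-(δ*η)) = ε ^ ((1:ℝ) + (-(δ*η) - 1)) := by norm_num
          _ = ε ^ (1:ℝ) * ε ^ (-(δ*η) - 1) := Real.rpow_add hε _ _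
          _ = ε * ε ^ (-(δ*η) - 1) := by rw [Real.rpow_one]
          _ ≤ ε * x ^ η := mul_le_mul_of_nonneg_left h1 hε.le
      have hb1 : Real.exp (-(C/2) * ε * x ^ η) ≤ E := by
        rw [hEdef]
        apply Real.exp_le_exp.mpr
        nlinarith [mul_le_mul_of_nonneg_left hkey (by linarith : (0:ℝ) ≤ C/2)]
      have hb2 : Real.exp (-(C/2) * ε * x ^ η)
          ≤ B * (ε ^ (-(k:ℝ)) * x ^ (-(η * (k:ℝ)))) := by
        have hy : (0:ℝ) < C/2 * ε * x ^ η := by positivity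
        have h2 : Real.exp (-(C/2 * ε * x ^ η)) ≤ (k.factorial : ℝ) / (C/2 * ε * x ^ η) ^ k := by
          rw [Real.exp_neg, inv_eq_one_div, div_le_div_iff₀ (Real.exp_pos _) (by positivity)]
          simpa [mul_comm] using pow_le_factorial_mul_exp' hy.le k
        have h3 : (k.factorial : ℝ) / (C/2 * ε * x ^ η) ^ k
            = B * (ε ^ (-(k:ℝ)) * x ^ (-(η * (k:ℝ)))) := by
          rw [hBdef, Real.rpow_neg hε.le, Real.rpow_natCast,
            Real.rpow_neg hx0.le, Real.rpow_mul hx0.le, Real.rpow_natCast]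
          rw [mul_pow, mul_pow]
          field_simp
          ring_nf
          rw [inv_pow, one_div, inv_pow, mul_inv_cancel₀ (pow_ne_zero _ hC.ne'), one_mul,
            inv_mul_cancel₀ (pow_ne_zero _ two_ne_zero)]
        calc Real.exp (-(C/2) * ε * x ^ η) = Real.exp (-(C/2 * ε * x ^ η)) := by ring_nf
          _ ≤ _ := h2.trans_eq h3
      have hb3 : x ^ (-(η * (k:ℝ))) ≤ N ^ ((2:ℝ) - (k:ℝ)*η) * (1 / x^2) := by
        have e1 : x ^ (-(η * (k:ℝ))) = x ^ ((2:ℝ) - (k:ℝ)*η) * (1 / x^2) := by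
          rw [show -(η * (k:ℝ)) = ((2:ℝ) - (k:ℝ)*η) + (-2) by ring, Real.rpow_add hx0]
          congr 1
          rw [show ((-2:ℝ)) = -((2:ℕ):ℝ) by norm_num, Real.rpow_neg hx0.le,
            Real.rpow_natCast, one_div]
        have e2 : x ^ ((2:ℝ) - (k:ℝ)*η) ≤ N ^ ((2:ℝ) - (k:ℝ)*η) :=
          Real.rpow_le_rpow_of_nonpos hN0 hNx (by linarith)
        rw [e1]
        exact mul_le_mul_of_nonneg_right e2 (by positivity)
      have hexp : Real.exp (-C * ε * x ^ η)
          = Real.exp (-(C/2) * ε * x ^ η) * Real.exp (-(C/2) * ε * x ^ η) := by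
        rw [← Real.exp_add]; ring_nf
      calc x ^ (-(1/(τ-1))) * Real.exp (-C * ε * x ^ η)
          = x ^ (-(1/(τ-1))) *
            (Real.exp (-(C/2) * ε * x ^ η) * Real.exp (-(C/2) * ε * x ^ η)) := by rw [hexp]
        _ ≤ 1 * (E * (B * (ε ^ (-(k:ℝ)) * (N ^ ((2:ℝ) - (k:ℝ)*η) * (1 / x^2))))) := by
            apply mul_le_mul hA _ (by positivity) zero_le_one
            apply mul_le_mul hb1 _ (Real.exp_pos _).le hE0.le
            refine hb2.trans ?_
            have : ε ^ (-(k:ℝ)) * x ^ (-(η * (k:ℝ)))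
                ≤ ε ^ (-(k:ℝ)) * (N ^ ((2:ℝ) - (k:ℝ)*η) * (1 / x^2)) :=
              mul_le_mul_of_nonneg_left hb3 (by positivity)
            exact mul_le_mul_of_nonneg_left this hB0.le
        _ = M * (1 / x^2) := by rw [hMdef]; ring
    · positivity
  have hg0 : ∀ i : ℕ, 0 ≤ (if N < (i : ℝ) then
          (i : ℝ) ^ (-(1 / (τ - 1))) * Real.exp (-C * ε * (i : ℝ) ^ η) else 0) := by
    intro i; split_ifs with hi
    · have hx0 : (0:ℝ) < i := lt_of_lt_of_le (lt_of_le_of_lt hN0.le hi) le_rfl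
      positivity
    · exact le_refl 0
  have hh : Summable (fun i : ℕ => M * (1 / ((i:ℝ)^2))) := hT.mul_left M
  have hg : Summable (fun i : ℕ => if N < (i : ℝ) then
      (i : ℝ) ^ (-(1 / (τ - 1))) * Real.exp (-C * ε * (i : ℝ) ^ η) else 0) :=
    Summable.of_nonneg_of_le hg0 hpt hh
  have hsum : (∑' i : ℕ, if N < (i : ℝ) then
      (i : ℝ) ^ (-(1 / (τ - 1))) * Real.exp (-C * ε * (i : ℝ) ^ η) else 0) ≤ M * T := by
    rw [hTdef, ← tsum_mul_left]
    exact Summable.tsum_le_tsum hpt hg hh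
  have hone : ε ^ (-(1/(τ-3))) * ε ^ (-(k:ℝ)) * N ^ ((2:ℝ)-(k:ℝ)*η) ≤ 1 := by
    have hNe : N ^ ((2:ℝ)-(k:ℝ)*η)
        = ε ^ ((-δ - (τ-1)/(τ-3)) * ((2:ℝ)-(k:ℝ)*η)) := by
      rw [hNdef, ← Real.rpow_mul hε.le]
    have hprod : ε ^ (-(1/(τ-3))) * ε ^ (-(k:ℝ)) * N ^ ((2:ℝ)-(k:ℝ)*η)
        = ε ^ (-(1/(τ-3)) + (-(k:ℝ)) + (-δ - (τ-1)/(τ-3)) * ((2:ℝ)-(k:ℝ)*η)) := by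
      rw [hNe, Real.rpow_add hε, Real.rpow_add hε]
    have hdc : δ * (((2*τ-1)/(τ-3))/δ) = (2*τ-1)/(τ-3) := by field_simp
    have heq : -(1/(τ-3)) + (-(k:ℝ)) + (-δ - (τ-1)/(τ-3)) * ((2:ℝ)-(k:ℝ)*η)
        = δ*((k:ℝ)*η) - 2*δ - (2*τ-1)/(τ-3) := by
      rw [hηdef]; exact stmt15_aux_heq τ δ (k:ℝ) (by linarith) (by linarith)
    have h3 := mul_le_mul_of_nonneg_left hkη hδ.le
    rw [mul_add, hdc] at h3
    have he : 0 ≤ -(1/(τ-3)) + (-(k:ℝ)) + (-δ - (τ-1)/(τ-3)) * ((2:ℝ)-(k:ℝ)*η) := by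
      rw [heq]; linarith [h3]
    rw [hprod]
    exact Real.rpow_le_one hε.le hε1 he
  calc ε ^ (-(1/(τ-3))) * (∑' i : ℕ, if N < (i : ℝ) then
        (i : ℝ) ^ (-(1 / (τ - 1))) * Real.exp (-C * ε * (i : ℝ) ^ η) else 0)
      ≤ ε ^ (-(1/(τ-3))) * (M * T) :=
        mul_le_mul_of_nonneg_left hsum (Real.rpow_nonneg hε.le _)
    _ = (ε ^ (-(1/(τ-3))) * ε ^ (-(k:ℝ)) * N ^ ((2:ℝ)-(k:ℝ)*η)) * (B * T * E) := by
        rw [hMdef]; ring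
    _ ≤ 1 * (B * T * E) := mul_le_mul_of_nonneg_right hone (by positivity)
    _ = B * T * E := one_mul _
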